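/- Let n ≥ 2 be an integer. For every function f in the complex linear span of {e_j : j ∈ Λ_{2n−1}^{†*}}, both cubature formulas hold: ∫_{[−1/2,1/2]³} f(x) dx = (1/(2n³)) · Σ_{k ∈ X_n^*} c_k · f(k/(2n)) and ∫_{[−1/2,1/2]³} f(x) dx = (1/(2n³)) · Σ_{k ∈ X_n} f(k/(2n)). -/

import Mathlib

open MeasureTheory Complex

attribute [local instance] Classical.propDecidable

/-- The exponential e_k(x) = exp(2 pi i (k1 x1 + k2 x2 + k3 x3)). -/
noncomputable def e3 (k : ℤ × ℤ × ℤ) (x : ℝ × ℝ × ℝ) : ℂ :=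
  Complex.exp (2 * Real.pi * Complex.I *
    ((k.1 : ℂ) * x.1 + (k.2.1 : ℂ) * x.2.1 + (k.2.2 : ℂ) * x.2.2))

/-- The point k/(2n) in three-space. -/
noncomputable def pt3 (n : ℕ) (k : ℤ × ℤ × ℤ) : ℝ × ℝ × ℝ :=
  ((k.1 : ℝ) / (2 * n), (k.2.1 : ℝ) / (2 * n), (k.2.2 : ℝ) / (2 * n))

/-- The cube of integer points with coordinates in [-m, m]. -/
noncomputable def box3 (m : ℕ) : Finset (ℤ × ℤ × ℤ) :=
  Finset.Icc (-(m : ℤ), -(m : ℤ), -(m : ℤ)) ((m : ℤ), (m : ℤ), (m : ℤ))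

/-- Λ_m^{†*} = {k : |k_ν + k_μ| ≤ m and |k_ν - k_μ| ≤ m for all ν < μ}. -/
noncomputable def LamDagStar (m : ℕ) : Finset (ℤ × ℤ × ℤ) :=
  (box3 m).filter fun k =>
    |k.1 + k.2.1| ≤ (m : ℤ) ∧ |k.1 - k.2.1| ≤ (m : ℤ) ∧
    |k.1 + k.2.2| ≤ (m : ℤ) ∧ |k.1 - k.2.2| ≤ (m : ℤ) ∧
    |k.2.1 + k.2.2| ≤ (m : ℤ) ∧ |k.2.1 - k.2.2| ≤ (m : ℤ)

/-- X_n = {k : k1 ≡ k2 ≡ k3 (mod 2), -n ≤ k_i < n}. -/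
noncomputable def X3 (n : ℕ) : Finset (ℤ × ℤ × ℤ) :=
  (box3 n).filter fun k =>
    k.1 % 2 = k.2.1 % 2 ∧ k.2.1 % 2 = k.2.2 % 2 ∧
    k.1 < (n : ℤ) ∧ k.2.1 < (n : ℤ) ∧ k.2.2 < (n : ℤ)

/-- X_n^* = {k : k1 ≡ k2 ≡ k3 (mod 2), |k_i| ≤ n}. -/
noncomputable def X3star (n : ℕ) : Finset (ℤ × ℤ × ℤ) :=
  (box3 n).filter fun k => k.1 % 2 = k.2.1 % 2 ∧ k.2.1 % 2 = k.2.2 % 2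

/-- The weight c_k = 2^{-m}, m = #{i : |k_i| = n}. -/
noncomputable def c3 (n : ℕ) (k : ℤ × ℤ × ℤ) : ℝ :=
  (1 / 2) ^ ((if |k.1| = (n : ℤ) then 1 else 0)
    + (if |k.2.1| = (n : ℤ) then 1 else 0)
    + (if |k.2.2| = (n : ℤ) then 1 else 0) : ℕ)

/-! ### Auxiliary material: roots of unity -/

noncomputable def zet (n : ℕ) : ℂ := Complex.exp (2 * Real.pi * Complex.I / (2 * n))

lemma zet_prim (n : ℕ) (hn : n ≠ 0) : IsPrimitiveRoot (zet n) (2 * n) := by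
  have := Complex.isPrimitiveRoot_exp (2 * n) (by omega)
  rw [zet]
  convert this using 2
  push_cast; ring

lemma zet_ne_zero (n : ℕ) : zet n ≠ 0 := Complex.exp_ne_zero _

lemma zet_zpow_eq_one (n : ℕ) (hn : n ≠ 0) (m : ℤ) :
    zet n ^ m = 1 ↔ ((2 * n : ℕ) : ℤ) ∣ m :=
  (zet_prim n hn).zpow_eq_one_iff_dvd m

lemma zet_pow_n (n : ℕ) (hn : n ≠ 0) : zet n ^ (n : ℤ) = (-1 : ℂ) := by
  rw [zet, ← Complex.exp_int_mul, ← Complex.exp_pi_mul_I]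
  congr 1
  have h : (n : ℂ) ≠ 0 := Nat.cast_ne_zero.mpr hn
  field_simp
  push_cast; field_simp

/-! ### The basic one-dimensional geometric sum -/

lemma Tsum (n : ℕ) (hn : n ≠ 0) (m : ℤ) :
    ∑ t ∈ Finset.Icc (-(n:ℤ)) ((n:ℤ) - 1), zet n ^ (m * t)
      = if ((2*n : ℕ) : ℤ) ∣ m then ((2*n : ℕ) : ℂ) else 0 := by
  set z := zet n ^ m with hz
  have hz0 : z ≠ 0 := zpow_ne_zero _ (zet_ne_zero n)
  have hterm : ∀ t : ℤ, zet n ^ (m * t) = z ^ t := fun t => by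
    rw [hz, ← zpow_mul]
  simp only [hterm]
  have hcard : (Finset.Icc (-(n:ℤ)) ((n:ℤ) - 1)).card = 2 * n := by
    rw [Int.card_Icc]; omega
  by_cases hdvd : ((2*n : ℕ) : ℤ) ∣ m
  · have hz1 : z = 1 := (zet_zpow_eq_one n hn m).mpr hdvd
    rw [if_pos hdvd]
    simp [hz1, hcard]
  · have hz1 : z ≠ 1 := fun h => hdvd ((zet_zpow_eq_one n hn m).mp h)
    rw [if_neg hdvd]
    have hre : ∑ t ∈ Finset.Icc (-(n:ℤ)) ((n:ℤ) - 1), z ^ t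
        = z ^ (-(n:ℤ)) * ∑ s ∈ Finset.range (2*n), z ^ s := by
      rw [Finset.mul_sum]
      apply Finset.sum_nbij' (fun t : ℤ => (t + n).toNat) (fun s : ℕ => (s : ℤ) - n)
      · intro a ha; simp only [Finset.mem_Icc] at ha; simp only [Finset.mem_range]; omega
      · intro a ha; simp only [Finset.mem_range] at ha; simp only [Finset.mem_Icc]; omega
      · intro a ha; simp only [Finset.mem_Icc] at ha; omega
      · intro a ha; simp only [Finset.mem_range] at ha; omega
      · intro a ha
        simp only [Finset.mem_Icc] at ha
        rw [← zpow_natCast z, ← zpow_add₀ hz0]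
        congr 1
        omega
    rw [hre, geom_sum_eq hz1]
    have : z ^ (2*n) = 1 := by
      rw [← zpow_natCast, hz, ← zpow_mul, mul_comm, zpow_mul, zpow_natCast,
        ((zet_prim n hn).pow_eq_one : zet n ^ (2*n) = 1), one_zpow]
    rw [this]
    simp

/-! ### Parity indicator via signs -/

lemma neg_one_zpow_par (k l : ℤ) :
    (-1 : ℂ) ^ (k + l) = if k % 2 = l % 2 then 1 else -1 := by
  rcases Int.even_or_odd (k + l) with h | h
  · rw [h.neg_one_zpow, if_pos]
    rw [Int.even_add] at h
    simp only [Int.even_iff] at h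
    omega
  · rw [Odd.neg_one_zpow h, if_neg]
    rw [Int.odd_add] at h
    simp only [Int.even_iff, Int.odd_iff] at h
    omega

lemma pointwise_par (n : ℕ) (hn : n ≠ 0) (j1 j2 j3 k1 k2 k3 : ℤ) :
    (if (k1 % 2 = k2 % 2 ∧ k2 % 2 = k3 % 2) then
        zet n ^ (j1*k1) * zet n ^ (j2*k2) * zet n ^ (j3*k3) else 0)
    = (1/4 : ℂ) * (zet n ^ (j1*k1) * zet n ^ (j2*k2) * zet n ^ (j3*k3)
        + zet n ^ ((j1+n)*k1) * zet n ^ ((j2+n)*k2) * zet n ^ (j3*k3)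
        + zet n ^ (j1*k1) * zet n ^ ((j2+n)*k2) * zet n ^ ((j3+n)*k3)
        + zet n ^ ((j1+n)*k1) * zet n ^ ((j2+2*n)*k2) * zet n ^ ((j3+n)*k3)) := by
  have hz0 := zet_ne_zero n
  have hsplit : ∀ a t c : ℤ, zet n ^ ((a + c*n)*t) = zet n ^ (a*t) * ((-1:ℂ)^t)^c := by
    intro a t c
    rw [show (a + c*n)*t = a*t + (n:ℤ)*(c * t) by ring, zpow_add₀ hz0]
    congr 1
    rw [zpow_mul, zet_pow_n n hn, ← zpow_mul, mul_comm c t, zpow_mul]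
  have h1 : ∀ a t : ℤ, zet n ^ ((a + n)*t) = zet n ^ (a*t) * (-1:ℂ)^t := by
    intro a t
    have := hsplit a t 1
    simpa using this
  have h2 : ∀ a t : ℤ, zet n ^ ((a + 2*n)*t) = zet n ^ (a*t) := by
    intro a t
    have := hsplit a t 2
    have hsq : ((-1:ℂ)^t)^(2:ℤ) = 1 := by
      rw [← zpow_mul, mul_comm, zpow_mul]
      norm_num
    rw [this, hsq, mul_one]
  simp only [h1, h2]
  have e12 : (-1:ℂ)^k1 * (-1:ℂ)^k2 = (-1:ℂ)^(k1+k2) := (zpow_add₀ (by norm_num) _ _).symm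
  have e23 : (-1:ℂ)^k2 * (-1:ℂ)^k3 = (-1:ℂ)^(k2+k3) := (zpow_add₀ (by norm_num) _ _).symm
  have e13 : (-1:ℂ)^k1 * (-1:ℂ)^k3 = (-1:ℂ)^(k1+k3) := (zpow_add₀ (by norm_num) _ _).symm
  rw [neg_one_zpow_par k1 k2] at e12
  rw [neg_one_zpow_par k2 k3] at e23
  rw [neg_one_zpow_par k1 k3] at e13
  set u1 := zet n ^ (j1*k1); set u2 := zet n ^ (j2*k2); set u3 := zet n ^ (j3*k3)
  set s1 := (-1:ℂ)^k1; set s2 := (-1:ℂ)^k2; set s3 := (-1:ℂ)^k3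
  split_ifs at e12 e23 e13 ⊢ <;>
    first
      | (exfalso; omega)
      | linear_combination (-(u1*u2*u3)/4) * (e12 + e23 + e13)

/-! ### Product decomposition of triple sums -/

lemma prod_sum3 (s1 s2 s3 : Finset ℤ) (f g h : ℤ → ℂ) :
    ∑ k ∈ s1 ×ˢ (s2 ×ˢ s3), f k.1 * g k.2.1 * h k.2.2
      = (∑ t ∈ s1, f t) * (∑ t ∈ s2, g t) * (∑ t ∈ s3, h t) := by
  rw [Finset.sum_product]
  simp only [Finset.sum_product]
  symm
  rw [mul_assoc, Finset.sum_mul]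
  apply Finset.sum_congr rfl; intro x _
  rw [Finset.sum_mul, Finset.mul_sum]
  apply Finset.sum_congr rfl; intro y _
  rw [Finset.mul_sum, Finset.mul_sum]
  apply Finset.sum_congr rfl; intro z _
  ring

lemma mem_box3 (m : ℕ) (k : ℤ × ℤ × ℤ) :
    k ∈ box3 m ↔ (-(m:ℤ) ≤ k.1 ∧ k.1 ≤ m) ∧ (-(m:ℤ) ≤ k.2.1 ∧ k.2.1 ≤ m)
      ∧ (-(m:ℤ) ≤ k.2.2 ∧ k.2.2 ≤ m) := by
  simp [box3, Finset.mem_Icc, Prod.le_def]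
  tauto

lemma X3_eq (n : ℕ) :
    X3 n = ((Finset.Icc (-(n:ℤ)) ((n:ℤ)-1)) ×ˢ ((Finset.Icc (-(n:ℤ)) ((n:ℤ)-1)) ×ˢ (Finset.Icc (-(n:ℤ)) ((n:ℤ)-1)))).filter
      (fun k => k.1 % 2 = k.2.1 % 2 ∧ k.2.1 % 2 = k.2.2 % 2) := by
  apply Finset.ext
  intro k
  simp only [X3, Finset.mem_filter, mem_box3, Finset.mem_product, Finset.mem_Icc]
  constructor
  · rintro ⟨⟨h1, h2, h3⟩, p1, p2, l1, l2, l3⟩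
    exact ⟨⟨⟨by omega, by omega⟩, ⟨by omega, by omega⟩, by omega, by omega⟩, p1, p2⟩
  · rintro ⟨⟨⟨a1, a2⟩, ⟨b1, b2⟩, c1, c2⟩, p1, p2⟩
    exact ⟨⟨⟨by omega, by omega⟩, ⟨by omega, by omega⟩, by omega, by omega⟩, p1, p2, by omega, by omega, by omega⟩

lemma X3star_eq (n : ℕ) :
    X3star n = ((Finset.Icc (-(n:ℤ)) (n:ℤ)) ×ˢ ((Finset.Icc (-(n:ℤ)) (n:ℤ)) ×ˢ (Finset.Icc (-(n:ℤ)) (n:ℤ)))).filter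
      (fun k => k.1 % 2 = k.2.1 % 2 ∧ k.2.1 % 2 = k.2.2 % 2) := by
  apply Finset.ext
  intro k
  simp only [X3star, Finset.mem_filter, mem_box3, Finset.mem_product, Finset.mem_Icc]

/-! ### The weighted one-dimensional sum equals the unweighted one -/

lemma zet_zpow_symm (n : ℕ) (hn : n ≠ 0) (a : ℤ) :
    zet n ^ (a * (n:ℤ)) = zet n ^ (a * (-(n:ℤ))) := by
  have h1 : zet n ^ (a * (n:ℤ)) = zet n ^ (a * (-(n:ℤ))) * zet n ^ (2 * (n:ℤ) * a) := by
    rw [← zpow_add₀ (zet_ne_zero n)]; congr 1; ring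
  have h2 : zet n ^ (2 * (n:ℤ) * a) = 1 := by
    rw [zet_zpow_eq_one n hn]
    exact ⟨a, by push_cast; ring⟩
  rw [h1, h2, mul_one]

lemma Tst_eq (n : ℕ) (hn : n ≠ 0) (a : ℤ) :
    ∑ t ∈ Finset.Icc (-(n:ℤ)) (n:ℤ), (if |t| = (n:ℤ) then (1/2:ℂ) else 1) * zet n ^ (a*t)
      = ∑ t ∈ Finset.Icc (-(n:ℤ)) ((n:ℤ)-1), zet n ^ (a*t) := by
  have hmem1 : (n:ℤ) ∉ insert (-(n:ℤ)) (Finset.Icc (-(n:ℤ)+1) ((n:ℤ)-1)) := by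
    simp [Finset.mem_Icc]; omega
  have hmem2 : (-(n:ℤ)) ∉ Finset.Icc (-(n:ℤ)+1) ((n:ℤ)-1) := by
    simp [Finset.mem_Icc]
  have hset1 : Finset.Icc (-(n:ℤ)) (n:ℤ)
      = insert (n:ℤ) (insert (-(n:ℤ)) (Finset.Icc (-(n:ℤ)+1) ((n:ℤ)-1))) := by
    apply Finset.ext; intro t
    simp only [Finset.mem_Icc, Finset.mem_insert]
    omega
  have hset2 : Finset.Icc (-(n:ℤ)) ((n:ℤ)-1)
      = insert (-(n:ℤ)) (Finset.Icc (-(n:ℤ)+1) ((n:ℤ)-1)) := by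
    apply Finset.ext; intro t
    simp only [Finset.mem_Icc, Finset.mem_insert]
    omega
  have hmid : ∀ t ∈ Finset.Icc (-(n:ℤ)+1) ((n:ℤ)-1),
      (if |t| = (n:ℤ) then (1/2:ℂ) else 1) * zet n ^ (a*t) = zet n ^ (a*t) := by
    intro t ht
    simp only [Finset.mem_Icc] at ht
    rw [if_neg (by rw [abs_eq (by omega)]; omega), one_mul]
  rw [hset1, hset2, Finset.sum_insert hmem1, Finset.sum_insert hmem2,
    Finset.sum_insert hmem2, Finset.sum_congr rfl hmid]
  rw [if_pos (by rw [abs_eq (by omega)]; omega), if_pos (by rw [abs_eq (by omega)]; omega)]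
  rw [zet_zpow_symm n hn a]
  ring

/-! ### Lattice points and zet -/

lemma e3_pt3 (n : ℕ) (hn : n ≠ 0) (j k : ℤ × ℤ × ℤ) :
    e3 j (pt3 n k) = zet n ^ (j.1 * k.1 + j.2.1 * k.2.1 + j.2.2 * k.2.2) := by
  rw [zet, ← Complex.exp_int_mul, e3, pt3]
  congr 1
  have h : (n : ℂ) ≠ 0 := Nat.cast_ne_zero.mpr hn
  push_cast
  field_simp

/-! ### The abstract core computation -/

noncomputable def TT (n : ℕ) (a : ℤ) : ℂ :=
  if ((2*n : ℕ) : ℤ) ∣ a then ((2*n : ℕ) : ℂ) else 0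

lemma core_sum (n : ℕ) (hn : n ≠ 0) (B : Finset ℤ) (w : ℤ → ℂ)
    (H : ∀ a : ℤ, ∑ t ∈ B, w t * zet n ^ (a * t) = TT n a) (j1 j2 j3 : ℤ) :
    ∑ k ∈ (B ×ˢ (B ×ˢ B)).filter
        (fun k : ℤ × ℤ × ℤ => k.1 % 2 = k.2.1 % 2 ∧ k.2.1 % 2 = k.2.2 % 2),
      (w k.1 * w k.2.1 * w k.2.2) * zet n ^ (j1 * k.1 + j2 * k.2.1 + j3 * k.2.2)
    = (1/4 : ℂ) * (TT n j1 * TT n j2 * TT n j3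
        + TT n (j1+n) * TT n (j2+n) * TT n j3
        + TT n j1 * TT n (j2+n) * TT n (j3+n)
        + TT n (j1+n) * TT n (j2+2*n) * TT n (j3+n)) := by
  rw [Finset.sum_filter]
  have hpt : ∀ k : ℤ × ℤ × ℤ,
      (if (k.1 % 2 = k.2.1 % 2 ∧ k.2.1 % 2 = k.2.2 % 2) then
        (w k.1 * w k.2.1 * w k.2.2) * zet n ^ (j1 * k.1 + j2 * k.2.1 + j3 * k.2.2) else 0)
      = (1/4 : ℂ) * ((w k.1 * zet n ^ (j1*k.1)) * (w k.2.1 * zet n ^ (j2*k.2.1)) * (w k.2.2 * zet n ^ (j3*k.2.2))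
        + (w k.1 * zet n ^ ((j1+n)*k.1)) * (w k.2.1 * zet n ^ ((j2+n)*k.2.1)) * (w k.2.2 * zet n ^ (j3*k.2.2))
        + (w k.1 * zet n ^ (j1*k.1)) * (w k.2.1 * zet n ^ ((j2+n)*k.2.1)) * (w k.2.2 * zet n ^ ((j3+n)*k.2.2))
        + (w k.1 * zet n ^ ((j1+n)*k.1)) * (w k.2.1 * zet n ^ ((j2+2*n)*k.2.1)) * (w k.2.2 * zet n ^ ((j3+n)*k.2.2))) := by
    intro k
    have hW : (if (k.1 % 2 = k.2.1 % 2 ∧ k.2.1 % 2 = k.2.2 % 2) then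
        (w k.1 * w k.2.1 * w k.2.2) * zet n ^ (j1 * k.1 + j2 * k.2.1 + j3 * k.2.2) else 0)
        = (w k.1 * w k.2.1 * w k.2.2) * (if (k.1 % 2 = k.2.1 % 2 ∧ k.2.1 % 2 = k.2.2 % 2) then
            zet n ^ (j1*k.1) * zet n ^ (j2*k.2.1) * zet n ^ (j3*k.2.2) else 0) := by
      split_ifs with h
      · rw [← zpow_add₀ (zet_ne_zero n), ← zpow_add₀ (zet_ne_zero n)]
      · rw [mul_zero]
    rw [hW, pointwise_par n hn]
    ring
  simp only [hpt]
  rw [← Finset.mul_sum, Finset.sum_add_distrib, Finset.sum_add_distrib, Finset.sum_add_distrib]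
  rw [prod_sum3 B B B (fun t => w t * zet n ^ (j1*t)) (fun t => w t * zet n ^ (j2*t)) (fun t => w t * zet n ^ (j3*t)),
    prod_sum3 B B B (fun t => w t * zet n ^ ((j1+n)*t)) (fun t => w t * zet n ^ ((j2+n)*t)) (fun t => w t * zet n ^ (j3*t)),
    prod_sum3 B B B (fun t => w t * zet n ^ (j1*t)) (fun t => w t * zet n ^ ((j2+n)*t)) (fun t => w t * zet n ^ ((j3+n)*t)),
    prod_sum3 B B B (fun t => w t * zet n ^ ((j1+n)*t)) (fun t => w t * zet n ^ ((j2+2*n)*t)) (fun t => w t * zet n ^ ((j3+n)*t))]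
  simp only [H]

/-! ### Evaluation of the four-term expression -/

lemma eval4 (n : ℕ) (hn : 2 ≤ n) (j1 j2 j3 : ℤ)
    (h1 : |j1| ≤ 2*(n:ℤ)-1) (h2 : |j2| ≤ 2*(n:ℤ)-1) (h3 : |j3| ≤ 2*(n:ℤ)-1)
    (h12 : |j1+j2| ≤ 2*(n:ℤ)-1) (h12' : |j1-j2| ≤ 2*(n:ℤ)-1)
    (h13 : |j1+j3| ≤ 2*(n:ℤ)-1) (h13' : |j1-j3| ≤ 2*(n:ℤ)-1)
    (h23 : |j2+j3| ≤ 2*(n:ℤ)-1) (h23' : |j2-j3| ≤ 2*(n:ℤ)-1) :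
    (1/4 : ℂ) * (TT n j1 * TT n j2 * TT n j3
        + TT n (j1+n) * TT n (j2+n) * TT n j3
        + TT n j1 * TT n (j2+n) * TT n (j3+n)
        + TT n (j1+n) * TT n (j2+2*n) * TT n (j3+n))
    = if j1 = 0 ∧ j2 = 0 ∧ j3 = 0 then 2*(n:ℂ)^3 else 0 := by
  have hcast : ((2*n : ℕ) : ℤ) = 2*(n:ℤ) := by push_cast; ring
  have hzero : ∀ a : ℤ, |a| ≤ 2*(n:ℤ)-1 → a ≠ 0 → TT n a = 0 := by
    intro a ha ha0
    rw [TT, if_neg]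
    intro hdvd
    exact ha0 (Int.eq_zero_of_abs_lt_dvd hdvd (by omega))
  have hpn : ∀ a : ℤ, |a| ≤ 2*(n:ℤ)-1 → ((2*n : ℕ) : ℤ) ∣ a + n → (a = n ∨ a = -(n:ℤ)) := by
    intro a ha ⟨q, hq⟩
    rw [hcast] at hq
    have hq01 : q = 0 ∨ q = 1 := by
      rcases le_or_gt q 0 with h | h
      · left
        by_contra hq0
        have : q ≤ -1 := by omega
        nlinarith [abs_le.mp ha]
      · right
        by_contra hq1
        have : 2 ≤ q := by omega
        nlinarith [abs_le.mp ha]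
    rcases hq01 with rfl | rfl
    · right; omega
    · left; omega
  by_cases hj : j1 = 0 ∧ j2 = 0 ∧ j3 = 0
  · obtain ⟨rfl, rfl, rfl⟩ := hj
    have hTT0 : TT n 0 = ((2*n : ℕ) : ℂ) := by rw [TT, if_pos (dvd_zero _)]
    have hTTn : TT n ((0:ℤ)+n) = 0 := by
      rw [TT, if_neg]
      rw [zero_add, hcast]
      intro hdvd
      have := Int.le_of_dvd (by omega) hdvd
      omega
    have hTT2n : TT n ((0:ℤ)+2*n) = ((2*n : ℕ) : ℂ) := by
      rw [TT, if_pos]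
      rw [zero_add, hcast]
    rw [if_pos ⟨rfl, rfl, rfl⟩, hTT0, hTTn, hTT2n]
    push_cast
    ring
  · rw [if_neg hj]
    have t1 : TT n j1 * TT n j2 * TT n j3 = 0 := by
      by_cases e1 : j1 = 0
      · by_cases e2 : j2 = 0
        · have e3 : j3 ≠ 0 := fun h => hj ⟨e1, e2, h⟩
          rw [hzero j3 h3 e3, mul_zero]
        · rw [hzero j2 h2 e2, mul_zero, zero_mul]
      · rw [hzero j1 h1 e1, zero_mul, zero_mul]
    have pair : ∀ a b : ℤ, |a| ≤ 2*(n:ℤ)-1 → |b| ≤ 2*(n:ℤ)-1 →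
        |a+b| ≤ 2*(n:ℤ)-1 → |a-b| ≤ 2*(n:ℤ)-1 →
        TT n (a+n) * TT n (b+n) = 0 := by
      intro a b ha hb hab hab'
      by_cases da : ((2*n : ℕ) : ℤ) ∣ a + n
      · by_cases db : ((2*n : ℕ) : ℤ) ∣ b + n
        · exfalso
          rcases hpn a ha da with rfl | rfl <;> rcases hpn b hb db with rfl | rfl <;>
            simp only [abs_le] at hab hab' <;> omega
        · simp only [TT]; rw [if_neg db, mul_zero]
      · simp only [TT]; rw [if_neg da, zero_mul]
    have t2 : TT n (j1+n) * TT n (j2+n) * TT n j3 = 0 := by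
      rw [pair j1 j2 h1 h2 h12 h12', zero_mul]
    have t3 : TT n j1 * TT n (j2+n) * TT n (j3+n) = 0 := by
      rw [mul_assoc, pair j2 j3 h2 h3 h23 h23', mul_zero]
    have t4 : TT n (j1+n) * TT n (j2+2*n) * TT n (j3+n) = 0 := by
      rw [mul_comm (TT n (j1+n)) (TT n (j2+2*n)), mul_assoc,
        pair j1 j3 h1 h3 h13 h13', mul_zero]
    rw [t1, t2, t3, t4]
    ring

/-! ### The integral of a generator -/

noncomputable def phi3 (m : ℤ) (x : ℝ) : ℂ := Complex.exp (2 * Real.pi * Complex.I * m * x)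

lemma oneD (m : ℤ) :
    ∫ x in Set.Icc (-(1:ℝ)/2) (1/2), phi3 m x = if m = 0 then 1 else 0 := by
  by_cases hm : m = 0
  · subst hm
    simp only [phi3, Int.cast_zero, mul_zero, zero_mul, Complex.exp_zero]
    simp [Real.volume_Icc]
    norm_num
  · rw [if_neg hm]
    rw [MeasureTheory.integral_Icc_eq_integral_Ioc,
      ← intervalIntegral.integral_of_le (by norm_num : (-(1:ℝ)/2) ≤ 1/2)]
    have hc : (2 * (Real.pi:ℂ) * Complex.I * m) ≠ 0 := by
      simp [Real.pi_ne_zero, Complex.I_ne_zero, hm]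
    have heq : ∀ x : ℝ, phi3 m x = Complex.exp ((2 * (Real.pi:ℂ) * Complex.I * m) * x) := by
      intro x; rw [phi3]
    rw [intervalIntegral.integral_congr (fun x _ => heq x), integral_exp_mul_complex hc]
    have key : Complex.exp (2 * (Real.pi:ℂ) * Complex.I * m * (1/2 : ℝ))
        = Complex.exp (2 * (Real.pi:ℂ) * Complex.I * m * ((-1/2 : ℝ))) := by
      rw [show (2 * (Real.pi:ℂ) * Complex.I * m * ((1:ℝ)/2 : ℝ))
          = 2 * (Real.pi:ℂ) * Complex.I * m * ((-1/2 : ℝ)) + m * (2 * Real.pi * Complex.I) by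
        push_cast; ring, Complex.exp_add, Complex.exp_int_mul_two_pi_mul_I, mul_one]
    rw [show ((-1:ℝ)/2 : ℝ) = ((-1/2 : ℝ)) by norm_num] at *
    rw [key]
    simp

lemma e3_factor (j : ℤ × ℤ × ℤ) (x : ℝ × ℝ × ℝ) :
    e3 j x = phi3 j.1 x.1 * (phi3 j.2.1 x.2.1 * phi3 j.2.2 x.2.2) := by
  rw [e3, phi3, phi3, phi3, ← Complex.exp_add, ← Complex.exp_add]
  congr 1
  ring

lemma integral_e3 (j : ℤ × ℤ × ℤ) :
    ∫ x in Set.Icc ((-(1:ℝ)/2, -(1:ℝ)/2, -(1:ℝ)/2)) (((1:ℝ)/2, (1:ℝ)/2, (1:ℝ)/2)), e3 j x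
      = if j = 0 then 1 else 0 := by
  rw [Set.Icc_prod_eq, Set.Icc_prod_eq]
  simp only [e3_factor]
  rw [MeasureTheory.Measure.volume_eq_prod ..,
    MeasureTheory.setIntegral_prod_mul (phi3 j.1)
      (fun y : ℝ × ℝ => phi3 j.2.1 y.1 * phi3 j.2.2 y.2)]
  have : ∫ (y : ℝ × ℝ) in (Set.Icc (-(1:ℝ)/2) (1/2)) ×ˢ (Set.Icc (-(1:ℝ)/2) (1/2)),
      phi3 j.2.1 y.1 * phi3 j.2.2 y.2
      = (∫ x in Set.Icc (-(1:ℝ)/2) (1/2), phi3 j.2.1 x) * ∫ x in Set.Icc (-(1:ℝ)/2) (1/2), phi3 j.2.2 x := by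
    rw [MeasureTheory.Measure.volume_eq_prod ..,
      MeasureTheory.setIntegral_prod_mul (phi3 j.2.1) (phi3 j.2.2)]
  rw [this, oneD, oneD, oneD]
  rcases j with ⟨a, b, c⟩
  by_cases ha : a = 0 <;> by_cases hb : b = 0 <;> by_cases hc : c = 0 <;>
    simp [ha, hb, hc, Prod.ext_iff]

/-! ### Generator sum lemmas -/

lemma c3_factor (n : ℕ) (k : ℤ × ℤ × ℤ) :
    ((c3 n k : ℝ) : ℂ) = (if |k.1| = (n:ℤ) then (1/2:ℂ) else 1)
      * (if |k.2.1| = (n:ℤ) then (1/2:ℂ) else 1)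
      * (if |k.2.2| = (n:ℤ) then (1/2:ℂ) else 1) := by
  rw [c3]
  push_cast
  rw [pow_add, pow_add]
  split_ifs <;> norm_num

lemma gen_sum_X3 (n : ℕ) (hn : 2 ≤ n) (j : ℤ × ℤ × ℤ) (hj : j ∈ LamDagStar (2*n-1)) :
    ∑ k ∈ X3 n, e3 j (pt3 n k) = if j = 0 then 2*(n:ℂ)^3 else 0 := by
  have hn0 : n ≠ 0 := by omega
  have H : ∀ a : ℤ, ∑ t ∈ Finset.Icc (-(n:ℤ)) ((n:ℤ)-1),
      (fun _ : ℤ => (1:ℂ)) t * zet n ^ (a * t) = TT n a := by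
    intro a
    simp only [one_mul]
    rw [Tsum n hn0 a, TT]
  have hcore := core_sum n hn0 (Finset.Icc (-(n:ℤ)) ((n:ℤ)-1)) (fun _ => (1:ℂ)) H j.1 j.2.1 j.2.2
  simp only [one_mul] at hcore
  rw [X3_eq]
  simp only [e3_pt3 n hn0 j]
  rw [hcore]
  simp only [LamDagStar, Finset.mem_filter, mem_box3] at hj
  obtain ⟨⟨b1, b2, b3⟩, a12, a12', a13, a13', a23, a23'⟩ := hj
  have hm : ((2*n-1 : ℕ) : ℤ) = 2*(n:ℤ)-1 := by omega
  rw [hm] at b1 b2 b3 a12 a12' a13 a13' a23 a23'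
  rw [eval4 n hn j.1 j.2.1 j.2.2 (by rw [abs_le]; omega) (by rw [abs_le]; omega)
    (by rw [abs_le]; omega) a12 a12' a13 a13' a23 a23']
  congr 1
  simp [Prod.ext_iff]

lemma gen_sum_X3star (n : ℕ) (hn : 2 ≤ n) (j : ℤ × ℤ × ℤ) (hj : j ∈ LamDagStar (2*n-1)) :
    ∑ k ∈ X3star n, ((c3 n k : ℝ) : ℂ) * e3 j (pt3 n k) = if j = 0 then 2*(n:ℂ)^3 else 0 := by
  have hn0 : n ≠ 0 := by omega
  set w : ℤ → ℂ := fun t => if |t| = (n:ℤ) then (1/2:ℂ) else 1 with hw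
  have H : ∀ a : ℤ, ∑ t ∈ Finset.Icc (-(n:ℤ)) (n:ℤ), w t * zet n ^ (a * t) = TT n a := by
    intro a
    rw [hw]
    rw [Tst_eq n hn0 a, Tsum n hn0 a, TT]
  have hcore := core_sum n hn0 (Finset.Icc (-(n:ℤ)) (n:ℤ)) w H j.1 j.2.1 j.2.2
  rw [X3star_eq]
  have hterm : ∀ k : ℤ × ℤ × ℤ, ((c3 n k : ℝ) : ℂ) * e3 j (pt3 n k)
      = (w k.1 * w k.2.1 * w k.2.2) * zet n ^ (j.1 * k.1 + j.2.1 * k.2.1 + j.2.2 * k.2.2) := by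
    intro k
    rw [c3_factor, e3_pt3 n hn0 j k, hw]
  simp only [hterm]
  rw [hcore]
  simp only [LamDagStar, Finset.mem_filter, mem_box3] at hj
  obtain ⟨⟨b1, b2, b3⟩, a12, a12', a13, a13', a23, a23'⟩ := hj
  have hm : ((2*n-1 : ℕ) : ℤ) = 2*(n:ℤ)-1 := by omega
  rw [hm] at b1 b2 b3 a12 a12' a13 a13' a23 a23'
  rw [eval4 n hn j.1 j.2.1 j.2.2 (by rw [abs_le]; omega) (by rw [abs_le]; omega)
    (by rw [abs_le]; omega) a12 a12' a13 a13' a23 a23']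
  congr 1
  simp [Prod.ext_iff]

lemma e3_continuous (j : ℤ × ℤ × ℤ) : Continuous (e3 j) := by
  unfold e3
  fun_prop

theorem trig_cubature_3d (n : ℕ) (hn : 2 ≤ n)
    (f : ℝ × ℝ × ℝ → ℂ)
    (hf : f ∈ Submodule.span ℂ (e3 '' (LamDagStar (2 * n - 1) : Set (ℤ × ℤ × ℤ)))) :
    (∫ x in Set.Icc ((-(1:ℝ)/2, -(1:ℝ)/2, -(1:ℝ)/2)) (((1:ℝ)/2, (1:ℝ)/2, (1:ℝ)/2)), f x
        = (1 / (2 * (n : ℂ) ^ 3)) * ∑ k ∈ X3star n, (c3 n k : ℂ) * f (pt3 n k)) ∧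
    (∫ x in Set.Icc ((-(1:ℝ)/2, -(1:ℝ)/2, -(1:ℝ)/2)) (((1:ℝ)/2, (1:ℝ)/2, (1:ℝ)/2)), f x
        = (1 / (2 * (n : ℂ) ^ 3)) * ∑ k ∈ X3 n, f (pt3 n k)) := by
  have hn3 : (2 * (n:ℂ)^3) ≠ 0 := by
    have h : (n:ℂ) ≠ 0 := Nat.cast_ne_zero.mpr (by omega)
    exact mul_ne_zero two_ne_zero (pow_ne_zero _ h)
  set S : Set (ℝ × ℝ × ℝ) :=
    Set.Icc ((-(1:ℝ)/2, -(1:ℝ)/2, -(1:ℝ)/2)) (((1:ℝ)/2, (1:ℝ)/2, (1:ℝ)/2)) with hS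
  suffices h : Continuous f ∧
      ((∫ x in S, f x = (1 / (2 * (n : ℂ) ^ 3)) * ∑ k ∈ X3star n, (c3 n k : ℂ) * f (pt3 n k)) ∧
       (∫ x in S, f x = (1 / (2 * (n : ℂ) ^ 3)) * ∑ k ∈ X3 n, f (pt3 n k))) by
    exact h.2
  induction hf using Submodule.span_induction with
  | mem g hg =>
    obtain ⟨j, hj, rfl⟩ := hg
    refine ⟨e3_continuous j, ?_, ?_⟩
    · rw [hS, integral_e3 j, gen_sum_X3star n hn j hj]
      split_ifs with h
      · field_simp; exact (div_self (Nat.cast_ne_zero.mpr (by omega))).symm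
      · rw [mul_zero]
    · rw [hS, integral_e3 j, gen_sum_X3 n hn j hj]
      split_ifs with h
      · field_simp; exact (div_self (Nat.cast_ne_zero.mpr (by omega))).symm
      · rw [mul_zero]
  | zero =>
    refine ⟨continuous_const, ?_, ?_⟩ <;> simp
  | add g₁ g₂ hg₁ hg₂ ih₁ ih₂ =>
    obtain ⟨hc₁, he₁, he₁'⟩ := ih₁
    obtain ⟨hc₂, he₂, he₂'⟩ := ih₂
    have hint₁ : IntegrableOn g₁ S := hc₁.integrableOn_Icc
    have hint₂ : IntegrableOn g₂ S := hc₂.integrableOn_Icc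
    refine ⟨hc₁.add hc₂, ?_, ?_⟩
    · rw [show (g₁ + g₂ : (ℝ × ℝ × ℝ) → ℂ) = fun x => g₁ x + g₂ x from rfl]
      rw [MeasureTheory.integral_add hint₁ hint₂, he₁, he₂, ← mul_add, ← Finset.sum_add_distrib]
      congr 1
      apply Finset.sum_congr rfl
      intro k _
      ring
    · rw [show (g₁ + g₂ : (ℝ × ℝ × ℝ) → ℂ) = fun x => g₁ x + g₂ x from rfl]
      rw [MeasureTheory.integral_add hint₁ hint₂, he₁', he₂', ← mul_add, ← Finset.sum_add_distrib]
  | smul a g hg ih =>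
    obtain ⟨hc, he, he'⟩ := ih
    refine ⟨hc.const_smul a, ?_, ?_⟩
    · rw [show (a • g : (ℝ × ℝ × ℝ) → ℂ) = fun x => a * g x from rfl]
      rw [MeasureTheory.integral_const_mul, he]
      have hsum : ∑ k ∈ X3star n, (c3 n k : ℂ) * (a * g (pt3 n k))
          = a * ∑ k ∈ X3star n, (c3 n k : ℂ) * g (pt3 n k) := by
        rw [Finset.mul_sum]
        apply Finset.sum_congr rfl
        intro k _
        ring
      rw [hsum]
      ring
    · rw [show (a • g : (ℝ × ℝ × ℝ) → ℂ) = fun x => a * g x from rfl]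
      rw [MeasureTheory.integral_const_mul, he', ← Finset.mul_sum]
      ring
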